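/- Let 𝔐 be a class of preference models and ★ a dynamic operator closed over 𝔐. The schemata (1) [★φ][<]ξ → (¬φ → A(φ → [★φ]ξ)) and (2) φ → [★φ][≤]φ are valid in ⟨𝔐, ★⟩ for all φ ∈ L_0 and ξ ∈ L_≤(★) if and only if ★ is 𝔐-Rec-compliant. -/
import Mathlib


inductive PForm (P : Type) : Type
  | atom : P → PForm P
  | neg  : PForm P → PForm P
  | and  : PForm P → PForm P → PForm P

inductive DForm (P : Type) : Type
  | atom  : P → DForm P
  | neg   : DForm P → DForm P
  | and   : DForm P → DForm P → DForm P
  | all   : DForm P → DForm P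
  | boxLe : DForm P → DForm P
  | boxLt : DForm P → DForm P
  | dyn   : PForm P → DForm P → DForm P

structure PrefModel (P : Type) where
  W : Type
  le : W → W → Prop
  refl : ∀ w, le w w
  trans : ∀ w₁ w₂ w₃, le w₁ w₂ → le w₂ w₃ → le w₁ w₃
  wf : WellFounded (fun w w' => le w w' ∧ ¬ le w' w)
  val : P → Set W

namespace PrefModel
variable {P : Type}
def lt (M : PrefModel P) (w w' : M.W) : Prop := M.le w w' ∧ ¬ M.le w' w
def Min (M : PrefModel P) (S : Set M.W) : Set M.W :=
  {w | w ∈ S ∧ ¬ ∃ w' ∈ S, M.le w' w ∧ ¬ M.le w w'}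
end PrefModel

def psat {P : Type} (M : PrefModel P) : PForm P → M.W → Prop
  | .atom p, w => w ∈ M.val p
  | .neg φ, w => ¬ psat M φ w
  | .and φ ψ, w => psat M φ w ∧ psat M ψ w

def pext {P : Type} (M : PrefModel P) (φ : PForm P) : Set M.W := {w | psat M φ w}

structure DynOp (P : Type) where
  rel : (M : PrefModel P) → PForm P → M.W → M.W → Prop
  refl : ∀ M φ w, rel M φ w w
  trans : ∀ M φ w₁ w₂ w₃, rel M φ w₁ w₂ → rel M φ w₂ w₃ → rel M φ w₁ w₃
  wf : ∀ M φ, WellFounded (fun w w' => rel M φ w w' ∧ ¬ rel M φ w' w)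

def DynOp.apply {P : Type} (s : DynOp P) (M : PrefModel P) (φ : PForm P) : PrefModel P where
  W := M.W
  le := s.rel M φ
  refl := s.refl M φ
  trans := s.trans M φ
  wf := s.wf M φ
  val := M.val

def DynOp.srel {P : Type} (s : DynOp P) (M : PrefModel P) (φ : PForm P) (w w' : M.W) : Prop :=
  s.rel M φ w w' ∧ ¬ s.rel M φ w' w

def PForm.toD {P : Type} : PForm P → DForm P
  | .atom p => .atom p
  | .neg φ => .neg φ.toD
  | .and φ ψ => .and φ.toD ψ.toD

namespace DForm
variable {P : Type}
def imp (ξ ψ : DForm P) : DForm P := .neg (.and ξ (.neg ψ))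
def iff (ξ ψ : DForm P) : DForm P := .and (imp ξ ψ) (imp ψ ξ)
def or (ξ ψ : DForm P) : DForm P := .neg (.and (.neg ξ) (.neg ψ))
def exi (ξ : DForm P) : DForm P := .neg (.all (.neg ξ))
def diaLt (ξ : DForm P) : DForm P := .neg (.boxLt (.neg ξ))
def mu (ξ : DForm P) : DForm P := .and ξ (.neg (diaLt ξ))
def bel (ψ χ : DForm P) : DForm P := .all (imp (mu χ) ψ)
end DForm

def dsat {P : Type} (s : DynOp P) : DForm P → (M : PrefModel P) → M.W → Prop
  | .atom p, M, w => w ∈ M.val p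
  | .neg ξ, M, w => ¬ dsat s ξ M w
  | .and ξ₁ ξ₂, M, w => dsat s ξ₁ M w ∧ dsat s ξ₂ M w
  | .all ξ, M, _ => ∀ w', dsat s ξ M w'
  | .boxLe ξ, M, w => ∀ w', M.le w' w → dsat s ξ M w'
  | .boxLt ξ, M, w => ∀ w', M.lt w' w → dsat s ξ M w'
  | .dyn φ ξ, M, w => dsat s ξ (s.apply M φ) w

def ClosedOver {P : Type} (s : DynOp P) (𝔐 : Set (PrefModel P)) : Prop :=
  ∀ M ∈ 𝔐, ∀ φ : PForm P, s.apply M φ ∈ 𝔐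

/-- `★` is `𝔐`-Rec-compliant. -/
def RecCompliant {P : Type} (s : DynOp P) (𝔐 : Set (PrefModel P)) : Prop :=
  ∀ M ∈ 𝔐, ∀ (φ : PForm P) (w w' : M.W),
    psat M φ w → ¬ psat M φ w' →
      ¬ s.rel M φ w' w ∧
      ∀ ξ : DForm P, dsat s (.dyn φ ξ) M w →
        ∃ w'' : M.W, psat M φ w'' ∧ dsat s (.dyn φ ξ) M w'' ∧ s.rel M φ w'' w'


lemma psat_apply {P : Type} (s : DynOp P) (M : PrefModel P) (ψ φ : PForm P)
    (w : M.W) : psat (s.apply M ψ) φ w ↔ psat M φ w := by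
  induction φ with
  | atom p => exact Iff.rfl
  | neg φ ih => exact not_congr ih
  | and φ χ ih1 ih2 => exact and_congr ih1 ih2

lemma dsat_toD {P : Type} (s : DynOp P) (φ : PForm P) (M : PrefModel P) (w : M.W) :
    dsat s φ.toD M w ↔ psat M φ w := by
  induction φ with
  | atom p => exact Iff.rfl
  | neg φ ih => exact not_congr ih
  | and φ χ ih1 ih2 => exact and_congr ih1 ih2

theorem rec_compliance_characterisation {P : Type}
    (𝔐 : Set (PrefModel P)) (s : DynOp P) (hclosed : ClosedOver s 𝔐) :
    (∀ (φ : PForm P) (ξ : DForm P), ∀ M ∈ 𝔐, ∀ w : M.W,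
      dsat s ((DForm.dyn φ (.boxLt ξ)).imp
        ((DForm.neg φ.toD).imp (.all (φ.toD.imp (.dyn φ ξ))))) M w ∧
      dsat s (φ.toD.imp (.dyn φ (.boxLe φ.toD))) M w) ↔
      RecCompliant s 𝔐 := by
  constructor
  · -- schemata → Rec-compliance
    intro hval M hM φ w w' hw hw'
    -- first conjunct: from schema (2) at w
    have hfst : ¬ s.rel M φ w' w := by
      intro hrel
      have h2 := (hval φ φ.toD M hM w).2
      simp only [DForm.imp, dsat] at h2
      push_neg at h2
      have hb := h2 ((dsat_toD s φ M w).mpr hw) w' hrel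
      exact hw' ((psat_apply s M φ φ w').mp ((dsat_toD s φ (s.apply M φ) w').mp hb))
    refine ⟨hfst, ?_⟩
    intro ξ hξ
    simp only [dsat] at hξ
    -- helper: at any ¬φ point v, there is a strictly better u satisfying ξ after update
    have helper : ∀ v : M.W, ¬ psat M φ v →
        ∃ u : M.W, s.rel M φ u v ∧ ¬ s.rel M φ v u ∧ dsat s ξ (s.apply M φ) u := by
      intro v hv
      by_contra hcon
      push_neg at hcon
      have h1 := (hval φ (.neg ξ) M hM v).1
      simp only [DForm.imp, dsat] at h1
      push_neg at h1
      have hA : ∀ u : (s.apply M φ).W, (s.apply M φ).lt u v → ¬ dsat s ξ (s.apply M φ) u := by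
        intro u hu
        exact hcon u hu.1 hu.2
      have hB := h1 hA (fun hc => (hv ((dsat_toD s φ M v).mp hc)))
      exact hB w ((dsat_toD s φ M w).mpr hw) hξ
    obtain ⟨u0, hu1, hu2, hu3⟩ := helper w' hw'
    set T : Set M.W := {u | s.rel M φ u w' ∧ ¬ s.rel M φ w' u ∧ dsat s ξ (s.apply M φ) u}
      with hT
    have hTne : T.Nonempty := ⟨u0, hu1, hu2, hu3⟩
    obtain ⟨m, hm, hmin⟩ := (s.wf M φ).has_min T hTne
    have hmφ : psat M φ m := by
      by_contra hmφ
      obtain ⟨u, hu1, hu2, hu3⟩ := helper m hmφ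
      have huw' : s.rel M φ u w' := s.trans M φ u m w' hu1 hm.1
      have hnw'u : ¬ s.rel M φ w' u := fun hc => hm.2.1 (s.trans M φ w' u m hc hu1)
      exact hmin u ⟨huw', hnw'u, hu3⟩ ⟨hu1, hu2⟩
    exact ⟨m, hmφ, hm.2.2, hm.1⟩
  · -- Rec-compliance → schemata
    intro hrec φ ξ M hM w
    constructor
    · -- schema (1)
      simp only [DForm.imp, dsat]
      push_neg
      intro hbox hnφ u huφ
      have huφ' := (dsat_toD s φ M u).mp huφ
      by_contra hdu
      have h := (hrec M hM φ u w huφ' ((dsat_toD s φ M w).mpr.mt hnφ)).2 (.neg ξ)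
      simp only [dsat] at h
      obtain ⟨w3, hw3φ, hw3ξ, hw3rel⟩ := h hdu
      have hstrict : (s.apply M φ).lt w3 w :=
        ⟨hw3rel, (hrec M hM φ w3 w hw3φ ((dsat_toD s φ M w).mpr.mt hnφ)).1⟩
      exact hw3ξ (hbox w3 hstrict)
    · -- schema (2)
      simp only [DForm.imp, dsat]
      push_neg
      intro hφ u hu
      have hφ' := (dsat_toD s φ M w).mp hφ
      rw [(dsat_toD s φ (s.apply M φ) u).trans (psat_apply s M φ φ u)]
      by_contra huφ
      exact (hrec M hM φ w u hφ' huφ).1 hu
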